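/- Eckart–Young for symmetric matrices: if R is symmetric with spectral decomposition R = Σ λ_i x_i x_iᵀ where |λ_1| ≥ ... ≥ |λ_N|, then the best rank-k approximation of R in Frobenius norm is Σ_{i≤k} λ_i x_i x_iᵀ, with error √(Σ_{i>k} λ_i²). -/

import Mathlib

open Matrix

/-- Frobenius norm of a real matrix. -/
noncomputable def frobNorm {N : ℕ} (M : Matrix (Fin N) (Fin N) ℝ) : ℝ :=
  Real.sqrt (∑ i, ∑ j, (M i j) ^ 2)

lemma expand_onb {ι : Type*} [DecidableEq ι] {κ : Type*} [Fintype κ] (T : Finset ι)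
    (y : ι → κ → ℝ) (hy : ∀ i ∈ T, ∀ j ∈ T, (∑ b, y i b * y j b) = if i = j then 1 else 0)
    (c : ι → ℝ) : (∑ b, (∑ i ∈ T, c i * y i b)^2) = ∑ i ∈ T, (c i)^2 := by
  calc ∑ b, (∑ i ∈ T, c i * y i b)^2
      = ∑ b, ∑ i ∈ T, ∑ j ∈ T, (c i * y i b) * (c j * y j b) := by
        simp_rw [pow_two, Finset.sum_mul_sum]
    _ = ∑ i ∈ T, ∑ j ∈ T, (c i * c j) * ∑ b, y i b * y j b := by
        rw [Finset.sum_comm]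
        refine Finset.sum_congr rfl fun i hi => ?_
        rw [Finset.sum_comm]
        refine Finset.sum_congr rfl fun j hj => ?_
        rw [Finset.mul_sum]
        exact Finset.sum_congr rfl fun b _ => by ring
    _ = ∑ i ∈ T, (c i)^2 := by
        refine Finset.sum_congr rfl fun i hi => ?_
        have h : ∀ j ∈ T, (c i * c j) * (∑ b, y i b * y j b) = if i = j then c i ^ 2 else 0 := by
          intro j hj
          rw [hy i hi j hj]
          split
          · rename_i hij; subst hij; ring
          · ring
        rw [Finset.sum_congr rfl h, Finset.sum_ite_eq, if_pos hi]

lemma card_filter_lt {N : ℕ} (k : ℕ) (h : k ≤ N) :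
    (Finset.univ.filter (fun i : Fin N => (i:ℕ) < k)).card = k := by
  have : (Finset.univ.filter (fun i : Fin N => (i:ℕ) < k))
      = Finset.map (Fin.castLEEmb h) Finset.univ := by
    ext i
    simp only [Finset.mem_filter, Finset.mem_univ, true_and, Finset.mem_map]
    constructor
    · intro hi; exact ⟨⟨i, hi⟩, rfl⟩
    · rintro ⟨j, rfl⟩; exact j.isLt
  rw [this, Finset.card_map, Finset.card_univ, Fintype.card_fin]

lemma exists_orthonormal_span {N k : ℕ} (P : Matrix (Fin N) (Fin N) ℝ) (hP : P.rank ≤ k) :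
    ∃ d : ℕ, d ≤ k ∧ ∃ u : Fin d → (Fin N → ℝ),
      (∀ s t, u s ⬝ᵥ u t = if s = t then 1 else 0) ∧
      (∀ j : Fin N, (∑ s, (u s ⬝ᵥ fun a => P a j) • u s) = fun a => P a j) := by
  classical
  set U : Submodule ℝ (EuclideanSpace ℝ (Fin N)) := (Submodule.span ℝ (Set.range P.col)).map
    (WithLp.linearEquiv 2 ℝ (Fin N → ℝ)).symm.toLinearMap with hU
  have hrank : Module.finrank ℝ U = P.rank := (LinearEquiv.finrank_map_eq _ _).trans (P.rank_eq_finrank_span_cols).symm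
  have hd : Module.finrank ℝ U ≤ k := by rw [hrank]; exact hP
  set d := Module.finrank ℝ U
  have b : OrthonormalBasis (Fin d) ℝ U := stdOrthonormalBasis ℝ U
  refine ⟨d, hd, fun s => ((b s : EuclideanSpace ℝ (Fin N)) : Fin N → ℝ), ?_, ?_⟩
  · intro s t
    have := b.orthonormal
    rw [orthonormal_iff_ite] at this
    have h2 := this s t
    rw [Submodule.coe_inner] at h2
    simp [PiLp.inner_apply, RCLike.inner_apply, dotProduct] at h2 ⊢
    rw [← h2]
    exact Finset.sum_congr rfl fun _ _ => mul_comm _ _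
  · intro j
    have hmem : WithLp.toLp 2 (fun a => P a j) ∈ U := by
      exact ⟨_, Submodule.subset_span ⟨j, rfl⟩, rfl⟩
    have h2 := congrArg (Subtype.val) (b.sum_repr ⟨_, hmem⟩)
    simp only [AddSubmonoidClass.coe_finset_sum, SetLike.val_smul] at h2
    have h3 : ∀ s : Fin d, ((b s : EuclideanSpace ℝ (Fin N)) ⬝ᵥ fun a => P a j)
        = b.repr ⟨_, hmem⟩ s := by
      intro s
      rw [b.repr_apply_apply, Submodule.coe_inner]
      simp [PiLp.inner_apply, RCLike.inner_apply, dotProduct]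
      exact Finset.sum_congr rfl fun _ _ => mul_comm _ _
    simp only [h3]
    simpa [WithLp.ofLp_sum, WithLp.ofLp_smul] using congrArg WithLp.ofLp h2

noncomputable def projQ {N d : ℕ} (u : Fin d → Fin N → ℝ) (v : Fin N → ℝ) : Fin N → ℝ :=
  fun a => ∑ s, (∑ b, u s b * v b) * u s a

section projQ
variable {N d : ℕ} (u : Fin d → Fin N → ℝ)

lemma projQ_dot (v w : Fin N → ℝ) :
    (∑ b, v b * projQ u w b) = ∑ s, (∑ b, u s b * v b) * (∑ b, u s b * w b) := by
  unfold projQ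
  calc (∑ b, v b * ∑ s, (∑ c, u s c * w c) * u s b)
      = ∑ b, ∑ s, v b * ((∑ c, u s c * w c) * u s b) :=
        Finset.sum_congr rfl fun b _ => by rw [Finset.mul_sum]
    _ = ∑ s, ∑ b, v b * ((∑ c, u s c * w c) * u s b) := Finset.sum_comm
    _ = ∑ s, (∑ b, u s b * v b) * (∑ b, u s b * w b) := by
        refine Finset.sum_congr rfl fun s _ => ?_
        rw [Finset.sum_mul]
        exact Finset.sum_congr rfl fun b _ => by ring

lemma projQ_udot (huu : ∀ s t, (∑ b, u s b * u t b) = if s = t then 1 else 0)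
    (v : Fin N → ℝ) (s : Fin d) :
    (∑ b, u s b * projQ u v b) = ∑ b, u s b * v b := by
  rw [projQ_dot]
  simp [huu]

lemma projQ_idem (huu : ∀ s t, (∑ b, u s b * u t b) = if s = t then 1 else 0)
    (v : Fin N → ℝ) : projQ u (projQ u v) = projQ u v := by
  funext a
  show (∑ s, (∑ b, u s b * projQ u v b) * u s a) = projQ u v a
  calc (∑ s, (∑ b, u s b * projQ u v b) * u s a)
      = ∑ s, (∑ b, u s b * v b) * u s a :=
        Finset.sum_congr rfl fun s _ => by rw [projQ_udot u huu v s]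
    _ = projQ u v a := rfl

lemma projQ_sub (v w : Fin N → ℝ) : projQ u (v - w) = projQ u v - projQ u w := by
  funext a
  simp only [projQ, Pi.sub_apply, mul_sub, Finset.sum_sub_distrib, sub_mul]

lemma projQ_nsq_sub (huu : ∀ s t, (∑ b, u s b * u t b) = if s = t then 1 else 0)
    (v : Fin N → ℝ) :
    (∑ a, (v a - projQ u v a)^2)
      = (∑ a, v a * v a) - ∑ s, (∑ b, u s b * v b)^2 := by
  have h1 : (∑ a, v a * projQ u v a) = ∑ s, (∑ b, u s b * v b)^2 := by
    rw [projQ_dot]; exact Finset.sum_congr rfl fun s _ => (pow_two _).symm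
  have h2 : (∑ a, projQ u v a * projQ u v a) = ∑ s, (∑ b, u s b * v b)^2 := by
    rw [projQ_dot]
    refine Finset.sum_congr rfl fun s _ => ?_
    rw [projQ_udot u huu, pow_two]
  calc ∑ a, (v a - projQ u v a)^2
      = ∑ a, (v a * v a - 2 * (v a * projQ u v a) + projQ u v a * projQ u v a) :=
        Finset.sum_congr rfl fun a _ => by ring
    _ = ((∑ a, v a * v a) - ∑ a, 2 * (v a * projQ u v a)) + ∑ a, projQ u v a * projQ u v a := by
        rw [Finset.sum_add_distrib, Finset.sum_sub_distrib]
    _ = _ := by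
        rw [← Finset.mul_sum, h1, h2]; ring

end projQ

theorem eckart_young_symmetric {N k : ℕ}
    (x : Fin N → (Fin N → ℝ)) (lam : Fin N → ℝ)
    (horth : ∀ i j : Fin N, x i ⬝ᵥ x j = if i = j then 1 else 0)
    (hsort : ∀ i j : Fin N, i ≤ j → |lam j| ≤ |lam i|)
    (R : Matrix (Fin N) (Fin N) ℝ)
    (hR : R = ∑ i, lam i • Matrix.vecMulVec (x i) (x i)) :
    (∀ P : Matrix (Fin N) (Fin N) ℝ, P.rank ≤ k →
      Real.sqrt (∑ i ∈ Finset.univ.filter (fun i : Fin N => k ≤ (i : ℕ)), (lam i) ^ 2)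
        ≤ frobNorm (P - R)) ∧
    frobNorm ((∑ i ∈ Finset.univ.filter (fun i : Fin N => (i : ℕ) < k),
        lam i • Matrix.vecMulVec (x i) (x i)) - R) =
      Real.sqrt (∑ i ∈ Finset.univ.filter (fun i : Fin N => k ≤ (i : ℕ)), (lam i) ^ 2) := by
  classical
  have hxd : ∀ i j : Fin N, (∑ b, x i b * x j b) = if i = j then 1 else 0 := by
    intro i j; simpa [dotProduct] using horth i j
  have hxx : ∀ a b : Fin N, (∑ i, x i a * x i b) = if a = b then 1 else 0 := by
    have h1 : (Matrix.of x) * (Matrix.of x)ᵀ = 1 := by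
      ext i j
      simpa [Matrix.mul_apply, Matrix.one_apply] using hxd i j
    have h2 := mul_eq_one_comm.mp h1
    intro a b
    have h3 : ((Matrix.of x)ᵀ * Matrix.of x) a b = (1 : Matrix (Fin N) (Fin N) ℝ) a b := by
      rw [h2]
    simpa [Matrix.mul_apply, Matrix.one_apply] using h3
  have hRrow : ∀ (c : Fin N) (i : Fin N), (∑ b, R c b * x i b) = lam i * x i c := by
    intro c i
    rw [hR]
    simp only [Matrix.sum_apply, Matrix.smul_apply, vecMulVec_apply, smul_eq_mul]
    calc (∑ b, (∑ m, lam m * (x m c * x m b)) * x i b)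
        = ∑ m, (lam m * x m c) * (∑ b, x m b * x i b) := by
          simp_rw [Finset.sum_mul]
          rw [Finset.sum_comm]
          refine Finset.sum_congr rfl fun m _ => ?_
          rw [Finset.mul_sum]
          exact Finset.sum_congr rfl fun b _ => by ring
      _ = lam i * x i c := by
          simp_rw [hxd]
          simp
  have part2calc : ∀ T : Finset (Fin N),
      (∑ a, ∑ b, (∑ i ∈ T, lam i * (x i a * x i b))^2) = ∑ i ∈ T, lam i ^2 := by
    intro T
    calc (∑ a, ∑ b, (∑ i ∈ T, lam i * (x i a * x i b))^2)
        = ∑ a, ∑ i ∈ T, (lam i * x i a)^2 := by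
          refine Finset.sum_congr rfl fun a _ => ?_
          rw [← expand_onb T x (fun i _ j _ => hxd i j) (fun i => lam i * x i a)]
          refine Finset.sum_congr rfl fun b _ => ?_
          congr 1
          exact Finset.sum_congr rfl fun i _ => by ring
      _ = ∑ i ∈ T, ∑ a, (lam i * x i a)^2 := Finset.sum_comm
      _ = ∑ i ∈ T, lam i ^2 := by
          refine Finset.sum_congr rfl fun i _ => ?_
          have h2 : (∑ a, x i a * x i a) = 1 := by simpa using hxd i i
          calc (∑ a, (lam i * x i a)^2) = lam i^2 * ∑ a, x i a * x i a := by
                rw [Finset.mul_sum]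
                exact Finset.sum_congr rfl fun a _ => by ring
            _ = lam i ^2 := by rw [h2, mul_one]
  have hfiltnot : Finset.univ.filter (fun i : Fin N => ¬ (i:ℕ) < k)
      = Finset.univ.filter (fun i : Fin N => k ≤ (i:ℕ)) := by
    ext i; simp [not_lt]
  constructor
  · -- lower bound
    intro P hkP
    obtain ⟨d, hd, u, huu, hspan⟩ := exists_orthonormal_span P hkP
    have huu' : ∀ s t, (∑ b, u s b * u t b) = if s = t then 1 else 0 := fun s t => by
      simpa [dotProduct] using huu s t
    have hq_col : ∀ j, projQ u (fun a => P a j) = fun a => P a j := by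
      intro j
      funext a
      have h2 := congrFun (hspan j) a
      simpa [projQ, Finset.sum_apply, Pi.smul_apply, smul_eq_mul, dotProduct] using h2
    set t : Fin N → ℝ := fun i => ∑ s, (∑ b, u s b * x i b)^2 with ht
    set z : Fin N → Fin N → ℝ := fun j a => R a j - projQ u (fun c => R c j) a with hz
    have ht_nonneg : ∀ i, 0 ≤ t i := fun i => Finset.sum_nonneg fun s _ => sq_nonneg _
    have ht_le1 : ∀ i, t i ≤ 1 := by
      intro i
      have h := projQ_nsq_sub u huu' (x i)
      have hx1 : (∑ a, x i a * x i a) = 1 := by simpa using hxd i i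
      have h0 : 0 ≤ (∑ a, (x i a - projQ u (x i) a)^2) :=
        Finset.sum_nonneg fun a _ => sq_nonneg _
      rw [h, hx1] at h0
      have hti : t i = ∑ s, (∑ b, u s b * x i b)^2 := rfl
      linarith
    have htsum : (∑ i, t i) ≤ (k:ℝ) := by
      have h1 : ∀ s : Fin d, (∑ b, (u s b)^2) = 1 := by
        intro s
        have h := huu' s s
        rw [if_pos rfl] at h
        rw [← h]
        exact Finset.sum_congr rfl fun b _ => pow_two _
      calc (∑ i, t i) = ∑ i, ∑ s, (∑ b, u s b * x i b)^2 := rfl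
        _ = ∑ s, ∑ i, (∑ b, u s b * x i b)^2 := Finset.sum_comm
        _ = ∑ s, ∑ b, (u s b)^2 := by
            refine Finset.sum_congr rfl fun s _ => ?_
            exact expand_onb Finset.univ (fun b => fun i => x i b)
              (fun b _ c _ => hxx b c) (u s)
        _ = ∑ s : Fin d, (1:ℝ) := Finset.sum_congr rfl fun s _ => h1 s
        _ = d := by simp
        _ ≤ k := by exact_mod_cast hd
    -- step 1 : column-wise lower bound
    have step1 : ∀ j, (∑ a, (z j a)^2) ≤ ∑ a, (P a j - R a j)^2 := by
      intro j
      set w : Fin N → ℝ := fun a => P a j - projQ u (fun c => R c j) a with hw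
      have hqw : projQ u w = w := by
        have hweq : w = (fun a => P a j) - projQ u (fun c => R c j) := rfl
        rw [hweq, projQ_sub, hq_col j, projQ_idem u huu']
      have hds : ∀ s : Fin d, (∑ b, u s b * z j b) = 0 := by
        intro s
        have hzz : (∑ b, u s b * z j b)
            = (∑ b, u s b * R b j) - ∑ b, u s b * projQ u (fun c => R c j) b := by
          rw [← Finset.sum_sub_distrib]
          exact Finset.sum_congr rfl fun b _ => by rw [hz]; ring
        rw [hzz, projQ_udot u huu', sub_self]
      have hwz : (∑ a, w a * z j a) = 0 := by
        have h1 : (∑ a, w a * z j a) = ∑ a, z j a * projQ u w a := by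
          rw [hqw]
          exact Finset.sum_congr rfl fun a _ => mul_comm _ _
        rw [h1, projQ_dot]
        refine Finset.sum_eq_zero fun s _ => ?_
        rw [hds s, zero_mul]
      have expand : ∀ a, (P a j - R a j) = w a - z j a := by
        intro a; rw [hw, hz]; ring
      have hsq : (∑ a, (P a j - R a j)^2) = (∑ a, (w a)^2) + ∑ a, (z j a)^2 := by
        calc (∑ a, (P a j - R a j)^2)
            = ∑ a, ((w a)^2 - 2 * (w a * z j a) + (z j a)^2) :=
              Finset.sum_congr rfl fun a _ => by rw [expand a]; ring
          _ = ((∑ a, (w a)^2) - ∑ a, 2 * (w a * z j a)) + ∑ a, (z j a)^2 := by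
              rw [Finset.sum_add_distrib, Finset.sum_sub_distrib]
          _ = _ := by rw [← Finset.mul_sum, hwz]; ring
      rw [hsq]
      exact le_add_of_nonneg_left (Finset.sum_nonneg fun a _ => sq_nonneg _)
    -- step 2/3 : identify the remainder
    have hMrow : ∀ (i : Fin N) (a : Fin N),
        (∑ b, z b a * x i b) = lam i * (x i a - projQ u (x i) a) := by
      intro i a
      have inner : ∀ s : Fin d,
          (∑ b, (∑ c, u s c * R c b) * x i b) = lam i * ∑ c, u s c * x i c := by
        intro s
        calc (∑ b, (∑ c, u s c * R c b) * x i b)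
            = ∑ c, u s c * ∑ b, R c b * x i b := by
              simp_rw [Finset.sum_mul]
              rw [Finset.sum_comm]
              refine Finset.sum_congr rfl fun c _ => ?_
              rw [Finset.mul_sum]
              exact Finset.sum_congr rfl fun b _ => by ring
          _ = ∑ c, u s c * (lam i * x i c) :=
              Finset.sum_congr rfl fun c _ => by rw [hRrow c i]
          _ = lam i * ∑ c, u s c * x i c := by
              rw [Finset.mul_sum]
              exact Finset.sum_congr rfl fun c _ => by ring
      have h2 : (∑ b, projQ u (fun c => R c b) a * x i b) = lam i * projQ u (x i) a := by
        show (∑ b, (∑ s, (∑ c, u s c * R c b) * u s a) * x i b)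
            = lam i * ∑ s, (∑ c, u s c * x i c) * u s a
        calc (∑ b, (∑ s, (∑ c, u s c * R c b) * u s a) * x i b)
            = ∑ s, ∑ b, ((∑ c, u s c * R c b) * u s a) * x i b := by
              simp_rw [Finset.sum_mul]
              rw [Finset.sum_comm]
          _ = ∑ s, u s a * (∑ b, (∑ c, u s c * R c b) * x i b) := by
              refine Finset.sum_congr rfl fun s _ => ?_
              rw [Finset.mul_sum]
              exact Finset.sum_congr rfl fun b _ => by ring
          _ = ∑ s, u s a * (lam i * ∑ c, u s c * x i c) :=
              Finset.sum_congr rfl fun s _ => by rw [inner s]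
          _ = lam i * ∑ s, (∑ c, u s c * x i c) * u s a := by
              rw [Finset.mul_sum]
              exact Finset.sum_congr rfl fun s _ => by ring
      have h3 : (∑ b, z b a * x i b)
          = (∑ b, R a b * x i b) - ∑ b, projQ u (fun c => R c b) a * x i b := by
        rw [← Finset.sum_sub_distrib]
        exact Finset.sum_congr rfl fun b _ => by rw [hz]; ring
      rw [h3, hRrow a i, h2]
      ring
    have hsum2 : (∑ j, ∑ a, (z j a)^2) = ∑ i, lam i ^2 * (1 - t i) := by
      calc (∑ j, ∑ a, (z j a)^2)
          = ∑ a, ∑ b, (z b a)^2 := Finset.sum_comm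
        _ = ∑ a, ∑ i, (∑ b, z b a * x i b)^2 := by
            refine Finset.sum_congr rfl fun a _ => ?_
            exact (expand_onb Finset.univ (fun b => fun i => x i b)
              (fun b _ c _ => hxx b c) (fun b => z b a)).symm
        _ = ∑ i, ∑ a, (∑ b, z b a * x i b)^2 := Finset.sum_comm
        _ = ∑ i, lam i ^2 * (1 - t i) := by
            refine Finset.sum_congr rfl fun i _ => ?_
            have hx1 : (∑ a, x i a * x i a) = 1 := by simpa using hxd i i
            calc (∑ a, (∑ b, z b a * x i b)^2)
                = ∑ a, lam i^2 * (x i a - projQ u (x i) a)^2 :=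
                  Finset.sum_congr rfl fun a _ => by rw [hMrow i a]; ring
              _ = lam i^2 * ∑ a, (x i a - projQ u (x i) a)^2 := (Finset.mul_sum _ _ _).symm
              _ = lam i ^2 * (1 - t i) := by
                  rw [projQ_nsq_sub u huu', hx1]
    -- step 5 : combinatorial bound
    have step5 : (∑ i ∈ Finset.univ.filter (fun i : Fin N => k ≤ (i:ℕ)), lam i ^2)
        ≤ ∑ i, lam i^2 * (1 - t i) := by
      by_cases hkN : N ≤ k
      · have htail0 : Finset.univ.filter (fun i : Fin N => k ≤ (i:ℕ)) = ∅ := by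
          rw [Finset.filter_eq_empty_iff]
          intro i _
          have := i.isLt
          omega
        rw [htail0, Finset.sum_empty]
        exact Finset.sum_nonneg fun i _ =>
          mul_nonneg (sq_nonneg _) (by linarith [ht_le1 i])
      · push_neg at hkN
        set ι : Fin N := ⟨k, hkN⟩ with hι
        have hc0 : (0:ℝ) ≤ lam ι ^2 := sq_nonneg _
        have hhead_le : ∀ i : Fin N, (i:ℕ) < k → lam ι ^2 ≤ lam i ^2 := by
          intro i hi
          have hle : i ≤ ι := by rw [Fin.le_def]; simp [hι]; omega
          have habs := hsort i ι hle
          calc lam ι ^2 = |lam ι|^2 := (sq_abs _).symm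
            _ ≤ |lam i|^2 := by
                apply pow_le_pow_left₀ (abs_nonneg _) habs
            _ = lam i ^2 := sq_abs _
        have htail_le : ∀ i : Fin N, k ≤ (i:ℕ) → lam i ^2 ≤ lam ι ^2 := by
          intro i hi
          have hle : ι ≤ i := by rw [Fin.le_def]; simp [hι]; omega
          have habs := hsort ι i hle
          calc lam i ^2 = |lam i|^2 := (sq_abs _).symm
            _ ≤ |lam ι|^2 := by
                apply pow_le_pow_left₀ (abs_nonneg _) habs
            _ = lam ι ^2 := sq_abs _
        have hsplit : (∑ i, lam i^2 * (1 - t i))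
            = (∑ i ∈ Finset.univ.filter (fun i : Fin N => (i:ℕ) < k), lam i^2*(1 - t i))
              + ∑ i ∈ Finset.univ.filter (fun i : Fin N => k ≤ (i:ℕ)), lam i^2*(1 - t i) := by
          rw [← Finset.sum_filter_add_sum_filter_not Finset.univ
            (fun i : Fin N => (i:ℕ) < k) (fun i => lam i^2 * (1 - t i)), hfiltnot]
        have e0 : (∑ i ∈ Finset.univ.filter (fun i : Fin N => k ≤ (i:ℕ)), lam i ^2)
            = (∑ i ∈ Finset.univ.filter (fun i : Fin N => k ≤ (i:ℕ)), lam i^2*(1 - t i))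
              + ∑ i ∈ Finset.univ.filter (fun i : Fin N => k ≤ (i:ℕ)), lam i^2 * t i := by
          rw [← Finset.sum_add_distrib]
          exact Finset.sum_congr rfl fun i _ => by ring
        have e1 : (∑ i ∈ Finset.univ.filter (fun i : Fin N => k ≤ (i:ℕ)), lam i^2 * t i)
            ≤ lam ι ^2 * ∑ i ∈ Finset.univ.filter (fun i : Fin N => k ≤ (i:ℕ)), t i := by
          rw [Finset.mul_sum]
          refine Finset.sum_le_sum fun i hi => ?_
          have hik : k ≤ (i:ℕ) := by
            simpa using (Finset.mem_filter.mp hi).2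
          exact mul_le_mul_of_nonneg_right (htail_le i hik) (ht_nonneg i)
        have e2 : lam ι ^2 * (∑ i ∈ Finset.univ.filter (fun i : Fin N => (i:ℕ) < k), (1 - t i))
            ≤ ∑ i ∈ Finset.univ.filter (fun i : Fin N => (i:ℕ) < k), lam i^2 * (1 - t i) := by
          rw [Finset.mul_sum]
          refine Finset.sum_le_sum fun i hi => ?_
          have hik : (i:ℕ) < k := by
            simpa using (Finset.mem_filter.mp hi).2
          exact mul_le_mul_of_nonneg_right (hhead_le i hik) (by linarith [ht_le1 i])
        have e3 : (∑ i ∈ Finset.univ.filter (fun i : Fin N => (i:ℕ) < k), (1 - t i))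
            = (k:ℝ) - ∑ i ∈ Finset.univ.filter (fun i : Fin N => (i:ℕ) < k), t i := by
          rw [Finset.sum_sub_distrib, Finset.sum_const, card_filter_lt k (le_of_lt hkN)]
          simp
        have e4 : (∑ i ∈ Finset.univ.filter (fun i : Fin N => (i:ℕ) < k), t i)
            + (∑ i ∈ Finset.univ.filter (fun i : Fin N => k ≤ (i:ℕ)), t i) = ∑ i, t i := by
          rw [← Finset.sum_filter_add_sum_filter_not Finset.univ
            (fun i : Fin N => (i:ℕ) < k) t, hfiltnot]
        have e5 : lam ι ^2 * (∑ i ∈ Finset.univ.filter (fun i : Fin N => k ≤ (i:ℕ)), t i)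
            ≤ lam ι ^2 * ((k:ℝ) - ∑ i ∈ Finset.univ.filter (fun i : Fin N => (i:ℕ) < k), t i) := by
          apply mul_le_mul_of_nonneg_left _ hc0
          linarith
        have e6 : lam ι ^2 * (∑ i ∈ Finset.univ.filter (fun i : Fin N => (i:ℕ) < k), (1 - t i))
            = lam ι ^2 * ((k:ℝ) - ∑ i ∈ Finset.univ.filter (fun i : Fin N => (i:ℕ) < k), t i) := by
          rw [e3]
        linarith
    -- assemble
    have main : (∑ i ∈ Finset.univ.filter (fun i : Fin N => k ≤ (i:ℕ)), lam i ^2)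
        ≤ ∑ a, ∑ b, ((P - R) a b)^2 := by
      calc (∑ i ∈ Finset.univ.filter (fun i : Fin N => k ≤ (i:ℕ)), lam i ^2)
          ≤ ∑ i, lam i^2 * (1 - t i) := step5
        _ = ∑ j, ∑ a, (z j a)^2 := hsum2.symm
        _ ≤ ∑ j, ∑ a, (P a j - R a j)^2 := Finset.sum_le_sum fun j _ => step1 j
        _ = ∑ a, ∑ b, ((P - R) a b)^2 := by
            rw [Finset.sum_comm]
            exact Finset.sum_congr rfl fun a _ => Finset.sum_congr rfl fun j _ => by
              rw [Matrix.sub_apply]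
    simp only [frobNorm]
    exact Real.sqrt_le_sqrt main
  · -- equality for the truncation
    have hentry : ∀ a b : Fin N,
        (((∑ i ∈ Finset.univ.filter (fun i : Fin N => (i:ℕ) < k),
          lam i • Matrix.vecMulVec (x i) (x i))) - R) a b
        = -(∑ i ∈ Finset.univ.filter (fun i : Fin N => k ≤ (i:ℕ)), lam i * (x i a * x i b)) := by
      intro a b
      rw [hR]
      simp only [Matrix.sub_apply, Matrix.sum_apply, Matrix.smul_apply, vecMulVec_apply,
        smul_eq_mul]
      rw [← Finset.sum_filter_add_sum_filter_not Finset.univ (fun i : Fin N => (i:ℕ) < k)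
        (fun i => lam i * (x i a * x i b)), hfiltnot]
      ring
    simp only [frobNorm]
    congr 1
    calc (∑ a, ∑ b, (((∑ i ∈ Finset.univ.filter (fun i : Fin N => (i:ℕ) < k),
          lam i • Matrix.vecMulVec (x i) (x i))) - R) a b ^2)
        = ∑ a, ∑ b, (∑ i ∈ Finset.univ.filter (fun i : Fin N => k ≤ (i:ℕ)),
            lam i * (x i a * x i b))^2 := by
          refine Finset.sum_congr rfl fun a _ => Finset.sum_congr rfl fun b _ => ?_
          rw [hentry a b]
          ring
      _ = ∑ i ∈ Finset.univ.filter (fun i : Fin N => k ≤ (i:ℕ)), lam i ^2 :=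
          part2calc _
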